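/- Let F = {a,b,c,d,e,f,g,h} with metric: d = 1 between distinct points within {a,b,c,d}, d = 1 between distinct points within {e,f,g,h}, and d = 1/2 between any point of {a,b,c,d} and any point of {e,f,g,h}. Then d is a metric, and in TC(F) the four measures f_1 = (1/2)(δ_a - δ_b + δ_c - δ_d), f_2 = (1/2)(δ_a + δ_b - δ_c - δ_d), f_3 = (1/2)(δ_e - δ_f + δ_g - δ_h), f_4 = (1/2)(δ_e + δ_f - δ_g - δ_h) span a subspace isometric to ell_infinity^4: ||sum θ_i f_i||_TC = 1 for all signs θ_i = ±1. -/

import Mathlib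

/-- The transportation cost norm of a zero-sum function `f` on a finite set `M` with
distance function `d`: the infimum of `∑ aᵢ d(xᵢ, yᵢ)` over all representations
`f = ∑ aᵢ (δ_{xᵢ} - δ_{yᵢ})` with `aᵢ ≥ 0`. -/
noncomputable def tcNorm {M : Type*} [Fintype M] [DecidableEq M]
    (d : M → M → ℝ) (f : M → ℝ) : ℝ :=
  sInf {c : ℝ | ∃ (m : ℕ) (a : Fin m → ℝ) (x y : Fin m → M),
    (∀ i, 0 ≤ a i) ∧
    (∀ p, f p = ∑ i, a i * ((if p = x i then (1 : ℝ) else 0) -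
      (if p = y i then 1 else 0))) ∧
    c = ∑ i, a i * d (x i) (y i)}

lemma tc_lb {M : Type*} [Fintype M] [DecidableEq M] (d : M → M → ℝ) (g u : M → ℝ)
    (hu : ∀ x y, u x - u y ≤ d x y) :
    ∀ c ∈ {c : ℝ | ∃ (m : ℕ) (a : Fin m → ℝ) (x y : Fin m → M),
      (∀ i, 0 ≤ a i) ∧
      (∀ p, g p = ∑ i, a i * ((if p = x i then (1 : ℝ) else 0) -
        (if p = y i then 1 else 0))) ∧
      c = ∑ i, a i * d (x i) (y i)}, (∑ p, g p * u p) ≤ c := by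
  rintro c ⟨m, a, x, y, ha, hf, rfl⟩
  have key : ∀ cc : M, ∑ p, (if p = cc then (1:ℝ) else 0) * u p = u cc := by
    intro cc
    simp [ite_mul, Finset.sum_ite_eq']
  have h1 : (∑ p, g p * u p) = ∑ i, a i * (u (x i) - u (y i)) := by
    simp_rw [hf, Finset.sum_mul]
    rw [Finset.sum_comm]
    refine Finset.sum_congr rfl fun i _ => ?_
    simp_rw [mul_assoc, ← Finset.mul_sum, sub_mul, Finset.sum_sub_distrib, key]
  rw [h1]
  refine Finset.sum_le_sum fun i _ => ?_
  exact mul_le_mul_of_nonneg_left (hu _ _) (ha i)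

lemma tc_case (d : Fin 8 → Fin 8 → ℝ)
    (hd : d = fun (x y : Fin 8) => if x = y then 0
      else if ((x : ℕ) < 4 ↔ (y : ℕ) < 4) then 1 else 1 / 2)
    (g : Fin 8 → ℝ) (P1 M1 P2 M2 : Fin 8)
    (h1 : (P1 : ℕ) < 4) (h2 : (M1 : ℕ) < 4) (h3 : 4 ≤ (P2 : ℕ)) (h4 : 4 ≤ (M2 : ℕ))
    (hP : P1 ≠ M1) (hQ : P2 ≠ M2)
    (hg : ∀ p, g p = (if p = P1 then (1:ℝ) else 0) - (if p = M2 then 1 else 0) +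
      ((if p = P2 then 1 else 0) - (if p = M1 then 1 else 0))) :
    tcNorm d g = 1 := by
  have hval : ∀ x y : Fin 8, x = y → (x:ℕ) = (y:ℕ) := fun x y h => by rw [h]
  -- the four points are pairwise distinct
  have hPM2 : P1 ≠ M2 := fun h => by have := hval _ _ h; omega
  have hPP2 : P1 ≠ P2 := fun h => by have := hval _ _ h; omega
  have hM1M2 : M1 ≠ M2 := fun h => by have := hval _ _ h; omega
  have hM1P2 : M1 ≠ P2 := fun h => by have := hval _ _ h; omega
  -- values of g
  have hgP1 : g P1 = 1 := by rw [hg]; simp [hPM2, hPP2, hP]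
  have hgM1 : g M1 = -1 := by rw [hg]; simp [hP.symm, hM1M2, hM1P2]
  have hgP2 : g P2 = 1 := by rw [hg]; simp [hPP2.symm, hQ, hM1P2.symm]
  have hgM2 : g M2 = -1 := by rw [hg]; simp [hPM2.symm, hQ.symm, hM1M2.symm]
  have hbound : ∀ p, -1 ≤ g p ∧ g p ≤ 1 := by
    intro p
    by_cases e1 : p = P1
    · rw [e1, hgP1]; norm_num
    by_cases e2 : p = M2
    · rw [e2, hgM2]; norm_num
    by_cases e3 : p = P2
    · rw [e3, hgP2]; norm_num
    by_cases e4 : p = M1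
    · rw [e4, hgM1]; norm_num
    · rw [hg]; simp [e1, e2, e3, e4]
  -- the dual bound
  have hu : ∀ x y : Fin 8, g x / 4 - g y / 4 ≤ d x y := by
    intro x y
    by_cases hxy : x = y
    · subst hxy; simp [hd]
    · have hx := hbound x
      have hy := hbound y
      have : d x y = 1 ∨ d x y = 1/2 := by
        rw [hd]; simp only [hxy, if_false]; split_ifs <;> tauto
      rcases this with h | h <;> rw [h] <;> linarith [hx.1, hx.2, hy.1, hy.2]
  have hsum : (∑ p, g p * (g p / 4)) = 1 := by
    have expand : (∑ p, g p * (g p / 4)) =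
        (g P1 - g M2 + (g P2 - g M1)) / 4 := by
      have key : ∀ cc : Fin 8, ∑ p, (if p = cc then (1:ℝ) else 0) * (g p / 4) = g cc / 4 := by
        intro cc; simp [ite_mul, Finset.sum_ite_eq']
      calc (∑ p, g p * (g p / 4))
          = ∑ p, ((if p = P1 then (1:ℝ) else 0) - (if p = M2 then 1 else 0) +
              ((if p = P2 then 1 else 0) - (if p = M1 then 1 else 0))) * (g p / 4) := by
            refine Finset.sum_congr rfl fun p _ => ?_; rw [hg]
        _ = (g P1 - g M2 + (g P2 - g M1)) / 4 := by
            simp_rw [add_mul, sub_mul, Finset.sum_add_distrib, Finset.sum_sub_distrib, key]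
            ring
    rw [expand, hgP1, hgM1, hgP2, hgM2]; norm_num
  -- membership of 1
  have hmem : (1:ℝ) ∈ {c : ℝ | ∃ (m : ℕ) (a : Fin m → ℝ) (x y : Fin m → Fin 8),
      (∀ i, 0 ≤ a i) ∧
      (∀ p, g p = ∑ i, a i * ((if p = x i then (1 : ℝ) else 0) -
        (if p = y i then 1 else 0))) ∧
      c = ∑ i, a i * d (x i) (y i)} := by
    refine ⟨2, ![1, 1], ![P1, P2], ![M2, M1], ?_, ?_, ?_⟩
    · intro i; fin_cases i <;> norm_num
    · intro p
      rw [hg, Fin.sum_univ_two]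
      simp only [Matrix.cons_val_zero, Matrix.cons_val_one, Matrix.head_cons]
      split_ifs <;> simp_all
    · rw [Fin.sum_univ_two]
      simp only [Matrix.cons_val_zero, Matrix.cons_val_one, Matrix.head_cons]
      have e1 : d P1 M2 = 1/2 := by
        rw [hd]; simp only [hPM2, if_false]; rw [if_neg]; omega
      have e2 : d P2 M1 = 1/2 := by
        rw [hd]; simp only [hM1P2.symm, if_false]; rw [if_neg]; omega
      rw [e1, e2]; norm_num
  have hlb := tc_lb d g (fun p => g p / 4) hu
  rw [tcNorm]
  refine le_antisymm (csInf_le ⟨∑ p, g p * (g p / 4), fun c hc => ?_⟩ hmem) ?_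
  · exact hlb c hc
  · refine le_csInf ⟨1, hmem⟩ fun c hc => ?_
    have := hlb c hc
    rw [hsum] at this
    exact this

section VecVals
private lemma wA5 : (![2⁻¹, -2⁻¹, 2⁻¹, -2⁻¹, 0, 0, 0, 0] : Fin 8 → ℝ) 5 = 0 := rfl
private lemma wA6 : (![2⁻¹, -2⁻¹, 2⁻¹, -2⁻¹, 0, 0, 0, 0] : Fin 8 → ℝ) 6 = 0 := rfl
private lemma wA7 : (![2⁻¹, -2⁻¹, 2⁻¹, -2⁻¹, 0, 0, 0, 0] : Fin 8 → ℝ) 7 = 0 := rfl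
private lemma wB5 : (![2⁻¹, 2⁻¹, -2⁻¹, -2⁻¹, 0, 0, 0, 0] : Fin 8 → ℝ) 5 = 0 := rfl
private lemma wB6 : (![2⁻¹, 2⁻¹, -2⁻¹, -2⁻¹, 0, 0, 0, 0] : Fin 8 → ℝ) 6 = 0 := rfl
private lemma wB7 : (![2⁻¹, 2⁻¹, -2⁻¹, -2⁻¹, 0, 0, 0, 0] : Fin 8 → ℝ) 7 = 0 := rfl
private lemma wC5 : (![0, 0, 0, 0, 2⁻¹, -2⁻¹, 2⁻¹, -2⁻¹] : Fin 8 → ℝ) 5 = -2⁻¹ := rfl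
private lemma wC6 : (![0, 0, 0, 0, 2⁻¹, -2⁻¹, 2⁻¹, -2⁻¹] : Fin 8 → ℝ) 6 = 2⁻¹ := rfl
private lemma wC7 : (![0, 0, 0, 0, 2⁻¹, -2⁻¹, 2⁻¹, -2⁻¹] : Fin 8 → ℝ) 7 = -2⁻¹ := rfl
private lemma wD5 : (![0, 0, 0, 0, 2⁻¹, 2⁻¹, -2⁻¹, -2⁻¹] : Fin 8 → ℝ) 5 = 2⁻¹ := rfl
private lemma wD6 : (![0, 0, 0, 0, 2⁻¹, 2⁻¹, -2⁻¹, -2⁻¹] : Fin 8 → ℝ) 6 = -2⁻¹ := rfl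
private lemma wD7 : (![0, 0, 0, 0, 2⁻¹, 2⁻¹, -2⁻¹, -2⁻¹] : Fin 8 → ℝ) 7 = -2⁻¹ := rfl
end VecVals


set_option maxHeartbeats 1000000 in
/-- Let `F = {a,b,c,d,e,f,g,h}` (identified with `Fin 8`, `a,b,c,d = 0,1,2,3`,
`e,f,g,h = 4,5,6,7`) with `d = 1` between distinct points of the same group and
`d = 1/2` between the two groups. Then `d` is a metric, and the four transportation
problems `f₁ = (1/2)(δ_a - δ_b + δ_c - δ_d)`, `f₂ = (1/2)(δ_a + δ_b - δ_c - δ_d)`,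
`f₃ = (1/2)(δ_e - δ_f + δ_g - δ_h)`, `f₄ = (1/2)(δ_e + δ_f - δ_g - δ_h)` span a
subspace of `TC(F)` isometric to `ℓ∞⁴`: `‖∑ θᵢ fᵢ‖_TC = 1` for all signs `θᵢ = ±1`. -/
theorem tc_contains_linfty4 (d : Fin 8 → Fin 8 → ℝ)
    (hd : d = fun (x y : Fin 8) => if x = y then 0
      else if ((x : ℕ) < 4 ↔ (y : ℕ) < 4) then 1 else 1 / 2)
    (f₁ f₂ f₃ f₄ : Fin 8 → ℝ)
    (hf₁ : f₁ = ![1 / 2, -(1 / 2), 1 / 2, -(1 / 2), 0, 0, 0, 0])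
    (hf₂ : f₂ = ![1 / 2, 1 / 2, -(1 / 2), -(1 / 2), 0, 0, 0, 0])
    (hf₃ : f₃ = ![0, 0, 0, 0, 1 / 2, -(1 / 2), 1 / 2, -(1 / 2)])
    (hf₄ : f₄ = ![0, 0, 0, 0, 1 / 2, 1 / 2, -(1 / 2), -(1 / 2)]) :
    ((∀ x y, d x y = 0 ↔ x = y) ∧ (∀ x y, d x y = d y x) ∧
      (∀ x y z, d x z ≤ d x y + d y z)) ∧
    (∀ θ₁ θ₂ θ₃ θ₄ : ℝ, (θ₁ = 1 ∨ θ₁ = -1) → (θ₂ = 1 ∨ θ₂ = -1) →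
      (θ₃ = 1 ∨ θ₃ = -1) → (θ₄ = 1 ∨ θ₄ = -1) →
      tcNorm d (fun p => θ₁ * f₁ p + θ₂ * f₂ p + θ₃ * f₃ p + θ₄ * f₄ p) = 1) := by
  have h0 : ∀ a, d a a = 0 := by intro a; rw [hd]; simp
  have hge : ∀ a b, a ≠ b → 1 / 2 ≤ d a b := by
    intro a b h; rw [hd]; simp only [h, if_false]; split_ifs <;> norm_num
  have hle : ∀ a b, d a b ≤ 1 := by
    intro a b; rw [hd]; dsimp only; split_ifs <;> norm_num
  have hnn : ∀ a b, 0 ≤ d a b := by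
    intro a b
    by_cases h : a = b
    · rw [h, h0]
    · linarith [hge a b h]
  constructor
  · refine ⟨?_, ?_, ?_⟩
    · intro x y
      constructor
      · intro h
        by_contra hne
        rw [hd] at h
        simp only [hne, if_false] at h
        split_ifs at h <;> norm_num at h
      · intro h; rw [h, h0]
    · intro x y
      by_cases h : x = y
      · rw [h]
      · have h' : y ≠ x := fun e => h e.symm
        rw [hd]
        simp only [h, h', if_false]
        by_cases c1 : (x : ℕ) < 4 <;> by_cases c2 : (y : ℕ) < 4 <;> simp [c1, c2]
    · intro x y z
      by_cases hxz : x = z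
      · rw [hxz, h0]; linarith [hnn z y, hnn y z]
      · by_cases hxy : x = y
        · subst hxy; rw [h0]; linarith
        · by_cases hyz : y = z
          · subst hyz; rw [h0]; linarith
          · linarith [hle x z, hge x y hxy, hge y z hyz]
  · intro θ₁ θ₂ θ₃ θ₄ h1 h2 h3 h4
    rcases h1 with rfl | rfl <;> rcases h2 with rfl | rfl <;>
      rcases h3 with rfl | rfl <;> rcases h4 with rfl | rfl
    · refine tc_case d hd _ 0 3 4 7 (by decide) (by decide)
        (by decide) (by decide) (by decide) (by decide) ?_
      intro p
      fin_cases p <;>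
        simp [hf₁, hf₂, hf₃, hf₄, Matrix.cons_val_succ', Matrix.cons_val_zero'] <;>
        (try simp only [wA5, wA6, wA7, wB5, wB6, wB7, wC5, wC6, wC7, wD5, wD6, wD7]) <;> norm_num
    · refine tc_case d hd _ 0 3 6 5 (by decide) (by decide)
        (by decide) (by decide) (by decide) (by decide) ?_
      intro p
      fin_cases p <;>
        simp [hf₁, hf₂, hf₃, hf₄, Matrix.cons_val_succ', Matrix.cons_val_zero'] <;>
        (try simp only [wA5, wA6, wA7, wB5, wB6, wB7, wC5, wC6, wC7, wD5, wD6, wD7]) <;> norm_num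
    · refine tc_case d hd _ 0 3 5 6 (by decide) (by decide)
        (by decide) (by decide) (by decide) (by decide) ?_
      intro p
      fin_cases p <;>
        simp [hf₁, hf₂, hf₃, hf₄, Matrix.cons_val_succ', Matrix.cons_val_zero'] <;>
        (try simp only [wA5, wA6, wA7, wB5, wB6, wB7, wC5, wC6, wC7, wD5, wD6, wD7]) <;> norm_num
    · refine tc_case d hd _ 0 3 7 4 (by decide) (by decide)
        (by decide) (by decide) (by decide) (by decide) ?_
      intro p
      fin_cases p <;>
        simp [hf₁, hf₂, hf₃, hf₄, Matrix.cons_val_succ', Matrix.cons_val_zero'] <;>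
        (try simp only [wA5, wA6, wA7, wB5, wB6, wB7, wC5, wC6, wC7, wD5, wD6, wD7]) <;> norm_num
    · refine tc_case d hd _ 2 1 4 7 (by decide) (by decide)
        (by decide) (by decide) (by decide) (by decide) ?_
      intro p
      fin_cases p <;>
        simp [hf₁, hf₂, hf₃, hf₄, Matrix.cons_val_succ', Matrix.cons_val_zero'] <;>
        (try simp only [wA5, wA6, wA7, wB5, wB6, wB7, wC5, wC6, wC7, wD5, wD6, wD7]) <;> norm_num
    · refine tc_case d hd _ 2 1 6 5 (by decide) (by decide)
        (by decide) (by decide) (by decide) (by decide) ?_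
      intro p
      fin_cases p <;>
        simp [hf₁, hf₂, hf₃, hf₄, Matrix.cons_val_succ', Matrix.cons_val_zero'] <;>
        (try simp only [wA5, wA6, wA7, wB5, wB6, wB7, wC5, wC6, wC7, wD5, wD6, wD7]) <;> norm_num
    · refine tc_case d hd _ 2 1 5 6 (by decide) (by decide)
        (by decide) (by decide) (by decide) (by decide) ?_
      intro p
      fin_cases p <;>
        simp [hf₁, hf₂, hf₃, hf₄, Matrix.cons_val_succ', Matrix.cons_val_zero'] <;>
        (try simp only [wA5, wA6, wA7, wB5, wB6, wB7, wC5, wC6, wC7, wD5, wD6, wD7]) <;> norm_num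
    · refine tc_case d hd _ 2 1 7 4 (by decide) (by decide)
        (by decide) (by decide) (by decide) (by decide) ?_
      intro p
      fin_cases p <;>
        simp [hf₁, hf₂, hf₃, hf₄, Matrix.cons_val_succ', Matrix.cons_val_zero'] <;>
        (try simp only [wA5, wA6, wA7, wB5, wB6, wB7, wC5, wC6, wC7, wD5, wD6, wD7]) <;> norm_num
    · refine tc_case d hd _ 1 2 4 7 (by decide) (by decide)
        (by decide) (by decide) (by decide) (by decide) ?_
      intro p
      fin_cases p <;>
        simp [hf₁, hf₂, hf₃, hf₄, Matrix.cons_val_succ', Matrix.cons_val_zero'] <;>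
        (try simp only [wA5, wA6, wA7, wB5, wB6, wB7, wC5, wC6, wC7, wD5, wD6, wD7]) <;> norm_num
    · refine tc_case d hd _ 1 2 6 5 (by decide) (by decide)
        (by decide) (by decide) (by decide) (by decide) ?_
      intro p
      fin_cases p <;>
        simp [hf₁, hf₂, hf₃, hf₄, Matrix.cons_val_succ', Matrix.cons_val_zero'] <;>
        (try simp only [wA5, wA6, wA7, wB5, wB6, wB7, wC5, wC6, wC7, wD5, wD6, wD7]) <;> norm_num
    · refine tc_case d hd _ 1 2 5 6 (by decide) (by decide)
        (by decide) (by decide) (by decide) (by decide) ?_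
      intro p
      fin_cases p <;>
        simp [hf₁, hf₂, hf₃, hf₄, Matrix.cons_val_succ', Matrix.cons_val_zero'] <;>
        (try simp only [wA5, wA6, wA7, wB5, wB6, wB7, wC5, wC6, wC7, wD5, wD6, wD7]) <;> norm_num
    · refine tc_case d hd _ 1 2 7 4 (by decide) (by decide)
        (by decide) (by decide) (by decide) (by decide) ?_
      intro p
      fin_cases p <;>
        simp [hf₁, hf₂, hf₃, hf₄, Matrix.cons_val_succ', Matrix.cons_val_zero'] <;>
        (try simp only [wA5, wA6, wA7, wB5, wB6, wB7, wC5, wC6, wC7, wD5, wD6, wD7]) <;> norm_num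
    · refine tc_case d hd _ 3 0 4 7 (by decide) (by decide)
        (by decide) (by decide) (by decide) (by decide) ?_
      intro p
      fin_cases p <;>
        simp [hf₁, hf₂, hf₃, hf₄, Matrix.cons_val_succ', Matrix.cons_val_zero'] <;>
        (try simp only [wA5, wA6, wA7, wB5, wB6, wB7, wC5, wC6, wC7, wD5, wD6, wD7]) <;> norm_num
    · refine tc_case d hd _ 3 0 6 5 (by decide) (by decide)
        (by decide) (by decide) (by decide) (by decide) ?_
      intro p
      fin_cases p <;>
        simp [hf₁, hf₂, hf₃, hf₄, Matrix.cons_val_succ', Matrix.cons_val_zero'] <;>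
        (try simp only [wA5, wA6, wA7, wB5, wB6, wB7, wC5, wC6, wC7, wD5, wD6, wD7]) <;> norm_num
    · refine tc_case d hd _ 3 0 5 6 (by decide) (by decide)
        (by decide) (by decide) (by decide) (by decide) ?_
      intro p
      fin_cases p <;>
        simp [hf₁, hf₂, hf₃, hf₄, Matrix.cons_val_succ', Matrix.cons_val_zero'] <;>
        (try simp only [wA5, wA6, wA7, wB5, wB6, wB7, wC5, wC6, wC7, wD5, wD6, wD7]) <;> norm_num
    · refine tc_case d hd _ 3 0 7 4 (by decide) (by decide)
        (by decide) (by decide) (by decide) (by decide) ?_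
      intro p
      fin_cases p <;>
        simp [hf₁, hf₂, hf₃, hf₄, Matrix.cons_val_succ', Matrix.cons_val_zero'] <;>
        (try simp only [wA5, wA6, wA7, wB5, wB6, wB7, wC5, wC6, wC7, wD5, wD6, wD7]) <;> norm_num
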